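/- Let n ≥ 2. In MvPolynomial (Fin n) (ZMod 2) define f_0 = (Q_0 ∘ Q_1 ∘ ⋯ ∘ Q_{n-2}) (∏_{j : Fin n} X j) and recursively f_{r+1} = MvPolynomial.homogeneousComponent (2^{r+1} * (2^n − 2) + 1) (Sq f_r). Then for every r ≥ 0, f_r is homogeneous of degree 2^r * (2^n − 2) + 1 and f_r ≠ 0. (This realizes the claim (Sq₁)^r ω ≠ 0 for all r ≥ 0 of the paper's Lemma 2, where ω = Q₀⋯Q_{n−2} ι_n and Sq₁ x = Sq^{|x|−1} x, so that iterating Sq₁ from degree d lands in degree 2d − 1.) -/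

import Mathlib

open MvPolynomial

/-- The `i`-th Milnor derivation `Q_i` on `𝔽₂[x_j : j ∈ σ]`: the unique
`𝔽₂`-linear derivation with `Q_i (X j) = (X j) ^ (2 ^ (i + 1))`. -/
noncomputable def Q (σ : Type*) (i : ℕ) :
    MvPolynomial σ (ZMod 2) →ₗ[ZMod 2] MvPolynomial σ (ZMod 2) :=
  (MvPolynomial.mkDerivation (ZMod 2)
    fun j => (MvPolynomial.X j : MvPolynomial σ (ZMod 2)) ^ (2 ^ (i + 1))).toLinearMap

/-- The total Steenrod square: the `𝔽₂`-algebra endomorphism sending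
each variable `X j` to `X j + (X j)²`. -/
noncomputable def Sq (σ : Type*) :
    MvPolynomial σ (ZMod 2) →ₐ[ZMod 2] MvPolynomial σ (ZMod 2) :=
  MvPolynomial.aeval fun j => MvPolynomial.X j + (MvPolynomial.X j) ^ 2

/-- `f_0 = Q₀⋯Q_{n-2}(x₁⋯x_n)`, and `f_{r+1} = Sq¹ f_r` (the homogeneous
component of `Sq f_r` in degree `2^{r+1}(2^n - 2) + 1`). -/
noncomputable def fseq (n : ℕ) : ℕ → MvPolynomial (Fin n) (ZMod 2)
  | 0 =>
      ((List.ofFn fun k : Fin (n - 1) => Q (Fin n) (k : ℕ)).foldr (· ∘ₗ ·) LinearMap.id)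
        (∏ j : Fin n, X j)
  | r + 1 =>
      MvPolynomial.homogeneousComponent (2 ^ (r + 1) * (2 ^ n - 2) + 1) (Sq (Fin n) (fseq n r))

/-- Exponent pattern: `φ i ↦ 2^(r+i+1)`, everything else `↦ 1`. -/

noncomputable def wfun (n r : ℕ) {m : ℕ} (φ : Fin m ↪ Fin n) : Fin n →₀ ℕ :=
  Finsupp.equivFunOnFinite.symm fun j =>
    1 + ∑ i : Fin m, if φ i = j then 2 ^ (r + (i : ℕ) + 1) - 1 else 0

lemma wfun_apply (n r m : ℕ) (φ : Fin m ↪ Fin n) (j : Fin n) :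
    wfun n r φ j = 1 + ∑ i : Fin m, if φ i = j then 2 ^ (r + (i : ℕ) + 1) - 1 else 0 := rfl

lemma wfun_apply_eq (n r m : ℕ) (φ : Fin m ↪ Fin n) (i : Fin m) :
    wfun n r φ (φ i) = 2 ^ (r + (i : ℕ) + 1) := by
  rw [wfun_apply, Finset.sum_eq_single i]
  · rw [if_pos rfl]
    have : 0 < 2 ^ (r + (i : ℕ) + 1) := Nat.pow_pos (by norm_num)
    omega
  · intro b _ hb
    simp [φ.injective.ne hb]
  · simp

lemma wfun_apply_ne (n r m : ℕ) (φ : Fin m ↪ Fin n) (j : Fin n)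
    (h : ∀ i, φ i ≠ j) : wfun n r φ j = 1 := by
  rw [wfun_apply, Finset.sum_eq_zero] <;> simp_all

lemma wfun_pos (n r m : ℕ) (φ : Fin m ↪ Fin n) (j : Fin n) : 0 < wfun n r φ j := by
  rw [wfun_apply]; omega

lemma wfun_isPow (n r m : ℕ) (φ : Fin m ↪ Fin n) (j : Fin n) :
    ∃ a, wfun n r φ j = 2 ^ a := by
  by_cases h : ∃ i, φ i = j
  · obtain ⟨i, rfl⟩ := h; exact ⟨_, wfun_apply_eq n r m φ i⟩
  · push_neg at h; exact ⟨0, by simpa using wfun_apply_ne n r m φ j h⟩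

lemma wfun_eq_pow_iff (n r m : ℕ) (φ : Fin m ↪ Fin n) (j : Fin n) (i : Fin m)
    (h : wfun n r φ j = 2 ^ (r + (i : ℕ) + 1)) : φ i = j := by
  by_cases hj : ∃ i', φ i' = j
  · obtain ⟨i', rfl⟩ := hj
    rw [wfun_apply_eq] at h
    have := Nat.pow_right_injective (le_refl 2) h
    have : (i' : ℕ) = i := by omega
    congr 1
    exact (Fin.ext this).symm
  · push_neg at hj
    rw [wfun_apply_ne n r m φ j hj] at h
    have : 1 < 2 ^ (r + (i : ℕ) + 1) := Nat.one_lt_two_pow (by omega)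
    omega

lemma wfun_injective (n r m : ℕ) : Function.Injective (wfun n r (m := m)) := by
  intro φ φ' h
  apply DFunLike.ext
  intro i
  exact (wfun_eq_pow_iff n r m φ' (φ i) i (by rw [← h, wfun_apply_eq])).symm

lemma Q_monomial (n s : ℕ) (w : Fin n →₀ ℕ) :
    Q (Fin n) s (monomial w (1 : ZMod 2)) =
      ∑ j : Fin n, if Odd (w j) then
        monomial (w - Finsupp.single j 1 + Finsupp.single j (2 ^ (s + 1))) (1 : ZMod 2)
      else 0 := by
  show (MvPolynomial.mkDerivation (ZMod 2) _) (monomial w (1 : ZMod 2)) = _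
  rw [mkDerivation_monomial, one_smul,
    Finsupp.sum_fintype _ _ (by intro i; simp)]
  refine Finset.sum_congr rfl fun j _ => ?_
  rcases Nat.even_or_odd (w j) with he | ho
  · rw [if_neg (by simpa using he)]
    have : ((w j : ℕ) : ZMod 2) = 0 := by
      rw [← ZMod.natCast_mod, Nat.even_iff.mp he, Nat.cast_zero]
    simp [this]
  · rw [if_pos ho]
    have : ((w j : ℕ) : ZMod 2) = 1 := by
      rw [← ZMod.natCast_mod, Nat.odd_iff.mp ho, Nat.cast_one]
    rw [this, smul_eq_mul, X_pow_eq_monomial, monomial_mul, one_mul]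

-- cons of an embedding

def econs {n m : ℕ} (j : Fin n) (φ : Fin m ↪ Fin n) (h : ∀ i, φ i ≠ j) :
    Fin (m + 1) ↪ Fin n :=
  ⟨Fin.cons j φ, Fin.cons_injective_iff.mpr ⟨by simpa using fun i => h i, φ.injective⟩⟩

@[simp] lemma econs_zero {n m : ℕ} (j : Fin n) (φ : Fin m ↪ Fin n) (h : ∀ i, φ i ≠ j) :
    econs j φ h 0 = j := rfl

@[simp] lemma econs_succ {n m : ℕ} (j : Fin n) (φ : Fin m ↪ Fin n) (h : ∀ i, φ i ≠ j)
    (i : Fin m) : econs j φ h i.succ = φ i := by simp [econs]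

lemma econs_bijective (n m : ℕ) :
    Function.Bijective (fun p : Σ (φ : Fin m ↪ Fin n), {j : Fin n // ∀ i, φ i ≠ j} =>
      econs p.2.1 p.1 p.2.2) := by
  constructor
  · rintro ⟨φ, j, hj⟩ ⟨φ', j', hj'⟩ hh
    have h0 : j = j' := by
      simpa using congrArg (fun ψ => ψ 0) hh
    have h1 : φ = φ' := by
      apply DFunLike.ext; intro i
      simpa using congrArg (fun ψ => ψ i.succ) hh
    subst h0; subst h1; rfl
  · intro ψ
    refine ⟨⟨⟨fun i => ψ i.succ, fun a b hab => Fin.succ_injective _ (ψ.injective hab)⟩,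
      ψ 0, fun i hi => Fin.succ_ne_zero i (ψ.injective hi)⟩, ?_⟩
    apply DFunLike.ext; intro i
    induction i using Fin.cases <;> simp <;> rfl

-- paste wfun block here when assembling; for now assume s1 defs

lemma odd_wfun (n r m : ℕ) (φ : Fin m ↪ Fin n) (j : Fin n) :
    Odd (wfun n r φ j) ↔ ∀ i, φ i ≠ j := by
  constructor
  · intro h i hij
    rw [← hij, wfun_apply_eq] at h
    rw [Nat.odd_iff, Nat.pow_mod] at h
    simp at h
  · intro h
    rw [wfun_apply_ne n r m φ j h]
    exact odd_one

lemma wfun_econs (n s m : ℕ) (φ : Fin m ↪ Fin n) (j : Fin n) (h : ∀ i, φ i ≠ j) :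
    wfun n (s + 1) φ - Finsupp.single j 1 + Finsupp.single j (2 ^ (s + 1))
      = wfun n s (econs j φ h) := by
  ext k
  rw [Finsupp.add_apply, Finsupp.tsub_apply]
  by_cases hk : k = j
  · subst hk
    rw [wfun_apply_ne n (s+1) m φ k h, Finsupp.single_apply, Finsupp.single_apply,
      if_pos rfl, if_pos rfl]
    have h2 : wfun n s (econs k φ h) ((econs k φ h) 0) = 2 ^ (s + ((0 : Fin (m+1)) : ℕ) + 1) :=
      wfun_apply_eq n s (m+1) _ 0
    simpa using h2.symm
  · rw [Finsupp.single_apply, Finsupp.single_apply, if_neg (fun hh => hk hh.symm),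
      if_neg (fun hh => hk hh.symm), tsub_zero, add_zero]
    by_cases hik : ∃ i, φ i = k
    · obtain ⟨i, rfl⟩ := hik
      have h2 := wfun_apply_eq n s (m+1) (econs j φ h) i.succ
      rw [econs_succ] at h2
      rw [wfun_apply_eq n (s+1) m φ i, h2, Fin.val_succ]
      congr 1
      ring
    · push_neg at hik
      have hall : ∀ i' : Fin (m+1), econs j φ h i' ≠ k := by
        intro i'
        induction i' using Fin.cases with
        | zero => simpa using fun hh => hk hh.symm
        | succ i => simpa using hik i
      rw [wfun_apply_ne n (s+1) m φ k hik, wfun_apply_ne n s (m+1) _ k hall]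

lemma monomial_one_eq (n : ℕ) (u : Fin n →₀ ℕ) :
    monomial u (1 : ZMod 2) = ∏ j : Fin n, X j ^ u j := by
  rw [← prod_X_pow_eq_monomial]
  apply Finset.prod_subset (Finset.subset_univ _)
  intro x _ hx
  rw [Finsupp.notMem_support_iff.mp hx, pow_zero]

lemma foldr_Q (n : ℕ) : ∀ (m s : ℕ),
    ((List.ofFn fun k : Fin m => Q (Fin n) (s + (k : ℕ))).foldr (· ∘ₗ ·) LinearMap.id)
      (∏ j : Fin n, X j)
    = ∑ φ : Fin m ↪ Fin n, monomial (wfun n s φ) (1 : ZMod 2) := by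
  intro m
  induction m with
  | zero =>
    intro s
    simp only [List.ofFn_zero, List.foldr_nil, LinearMap.id_apply]
    rw [Finset.sum_eq_single_of_mem (Function.Embedding.ofIsEmpty) (Finset.mem_univ _)
      (fun φ _ hφ => absurd (DFunLike.ext φ Function.Embedding.ofIsEmpty fun i => i.elim0) hφ)]
    rw [monomial_one_eq]
    refine Finset.prod_congr rfl fun j _ => ?_
    rw [wfun_apply]
    simp
  | succ m ih =>
    intro s
    rw [List.ofFn_succ, List.foldr_cons]
    have harg : (List.ofFn fun k : Fin m => Q (Fin n) (s + ((k.succ : Fin (m+1)) : ℕ)))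
        = List.ofFn fun k : Fin m => Q (Fin n) ((s + 1) + (k : ℕ)) := by
      refine congrArg _ (funext fun k => ?_); rw [Fin.val_succ, ← add_assoc, add_right_comm]
    rw [LinearMap.comp_apply, harg, ih (s + 1), map_sum]
    simp only [Fin.val_zero, add_zero]
    have step : ∀ φ : Fin m ↪ Fin n,
        Q (Fin n) s (monomial (wfun n (s+1) φ) (1 : ZMod 2))
          = ∑ j ∈ Finset.univ.filter (fun j => ∀ i, φ i ≠ j),
              monomial (wfun n (s+1) φ - Finsupp.single j 1
                + Finsupp.single j (2 ^ (s + 1))) (1 : ZMod 2) := by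
      intro φ
      rw [Q_monomial, Finset.sum_filter]
      refine Finset.sum_congr rfl fun j _ => ?_
      exact if_congr (odd_wfun n (s+1) m φ j) rfl rfl
    rw [Finset.sum_congr rfl (fun φ _ => step φ), Finset.sum_sigma']
    refine Finset.sum_bij
      (fun (p : Σ _ : Fin m ↪ Fin n, Fin n) (hp) =>
        econs p.2 p.1 (by simpa using (Finset.mem_sigma.mp hp).2)) ?_ ?_ ?_ ?_
    · intro p hp; exact Finset.mem_univ _
    · rintro ⟨φ, j⟩ hp ⟨φ', j'⟩ hp' hh
      have h0 : j = j' := by simpa using congrArg (fun ψ => ψ 0) hh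
      have h1 : φ = φ' := by
        apply DFunLike.ext; intro i
        simpa using congrArg (fun ψ => ψ i.succ) hh
      subst h0; subst h1; rfl
    · intro ψ _
      refine ⟨⟨⟨fun i => ψ i.succ, fun a b hab => Fin.succ_injective _ (ψ.injective hab)⟩,
        ψ 0⟩, ?_, ?_⟩
      · simp only [Finset.mem_sigma, Finset.mem_univ, true_and, Finset.mem_filter]
        exact fun i hi => Fin.succ_ne_zero i (ψ.injective hi)
      · apply DFunLike.ext; intro i
        induction i using Fin.cases <;> simp <;> rfl
    · rintro ⟨φ, j⟩ hp
      rw [wfun_econs]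

lemma hc_mono (n N : ℕ) (u : Fin n →₀ ℕ) :
    homogeneousComponent N (monomial u (1 : ZMod 2))
      = if u.degree = N then monomial u (1 : ZMod 2) else 0 := by
  have hmem : (monomial u (1 : ZMod 2)) ∈ homogeneousSubmodule (Fin n) (ZMod 2) u.degree :=
    (mem_homogeneousSubmodule _ _).mpr (isHomogeneous_monomial _ rfl)
  rw [homogeneousComponent_of_mem hmem]
  simp [eq_comm]

lemma Sq_monomial (n : ℕ) (w : Fin n →₀ ℕ) (hw : ∀ j, ∃ a, w j = 2 ^ a) :
    Sq (Fin n) (monomial w (1 : ZMod 2))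
      = ∑ t ∈ Finset.univ.powerset,
          monomial (Finsupp.equivFunOnFinite.symm fun j : Fin n =>
            if j ∈ t then w j else 2 * w j) (1 : ZMod 2) := by
  unfold Sq
  rw [aeval_monomial, Finsupp.prod_fintype _ _ (fun j => pow_zero _)]
  have hfac : ∀ j : Fin n, (X j + (X j : MvPolynomial (Fin n) (ZMod 2)) ^ 2) ^ (w j)
      = X j ^ (w j) + X j ^ (2 * w j) := by
    intro j
    obtain ⟨a, ha⟩ := hw j
    rw [ha, add_pow_char_pow, ← pow_mul]
  rw [Finset.prod_congr rfl fun j _ => hfac j, Finset.prod_add]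
  simp only [map_one, one_mul]
  refine Finset.sum_congr rfl fun t ht => ?_
  rw [monomial_one_eq]
  rw [show (∏ j : Fin n, X j ^ ((Finsupp.equivFunOnFinite.symm fun j : Fin n =>
        if j ∈ t then w j else 2 * w j) j : ℕ))
      = ∏ j : Fin n, X (R := ZMod 2) j ^ (if j ∈ t then w j else 2 * w j) from rfl]
  rw [← Finset.prod_mul_prod_compl t, Finset.compl_eq_univ_sdiff]
  congr 1
  · exact Finset.prod_congr rfl fun j hj => by rw [if_pos hj]
  · refine Finset.prod_congr rfl fun j hj => ?_
    rw [if_neg (Finset.mem_sdiff.mp hj).2]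

lemma degree_wfun (n r m : ℕ) (φ : Fin m ↪ Fin n) :
    (wfun n r φ).degree = ∑ j : Fin n, wfun n r φ j := by
  rw [Finsupp.degree]
  exact Finset.sum_subset (Finset.subset_univ _)
    (fun x _ hx => Finsupp.notMem_support_iff.mp hx)

lemma sum_wfun (n r m : ℕ) (φ : Fin m ↪ Fin n) :
    ∑ j : Fin n, wfun n r φ j = n + ∑ i : Fin m, (2 ^ (r + (i : ℕ) + 1) - 1) := by
  simp only [wfun_apply]
  rw [Finset.sum_add_distrib, Finset.sum_const, Finset.card_univ, Fintype.card_fin, smul_eq_mul,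
    mul_one, Finset.sum_comm]
  congr 1
  refine Finset.sum_congr rfl fun i _ => ?_
  rw [Finset.sum_ite_eq Finset.univ (φ i) (fun _ => 2 ^ (r + (i : ℕ) + 1) - 1),
    if_pos (Finset.mem_univ _)]

lemma sum_pows (r : ℕ) : ∀ m : ℕ,
    (∑ i : Fin m, (2 ^ (r + (i : ℕ) + 1) - 1)) + m = 2 ^ (r + 1) * (2 ^ m - 1)
  | 0 => by simp
  | (m + 1) => by
    rw [Fin.sum_univ_castSucc]
    simp only [Fin.coe_castSucc, Fin.val_last]
    have ih := sum_pows r m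
    have h1 : 2 ^ (r + m + 1) = 2 ^ (r + 1) * 2 ^ m := by ring
    have h2 : (1 : ℕ) ≤ 2 ^ m := Nat.one_le_two_pow
    have h3 : 2 ^ (m + 1) = 2 * 2 ^ m := by ring
    have h4 : 2 ^ (r + 1) * (2 ^ m - 1) = 2 ^ (r + 1) * 2 ^ m - 2 ^ (r + 1) := by
      rw [Nat.mul_sub, mul_one]
    have h5 : 2 ^ (r + 1) * (2 * 2 ^ m - 1) = 2 * (2 ^ (r + 1) * 2 ^ m) - 2 ^ (r + 1) := by
      rw [Nat.mul_sub, mul_one]; ring_nf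
    have h6 : 2 ^ (r + 1) ≤ 2 ^ (r + 1) * 2 ^ m := Nat.le_mul_of_pos_right _ (by positivity)
    have h7 : (1:ℕ) ≤ 2 ^ (r + m) := Nat.one_le_two_pow
    have h8 : 2 ^ (r + 1) * 2 ^ m = 2 * 2 ^ (r + m) := by ring
    rw [h3]
    omega

lemma degree_wfun_eq (n r : ℕ) (hn : 2 ≤ n) (φ : Fin (n - 1) ↪ Fin n) :
    (wfun n r φ).degree = 2 ^ r * (2 ^ n - 2) + 1 := by
  rw [degree_wfun, sum_wfun]
  have h0 := sum_pows r (n - 1)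
  have h1 : 2 ^ (r + 1) * (2 ^ (n - 1) - 1) = 2 ^ r * (2 ^ n - 2) := by
    have h2 : (2 : ℕ) ^ n = 2 * 2 ^ (n - 1) := by
      rw [← pow_succ']; congr 1; omega
    have h3 : (1 : ℕ) ≤ 2 ^ (n - 1) := Nat.one_le_two_pow
    have h4 : 2 ^ (r + 1) * (2 ^ (n - 1) - 1) = 2 * (2 ^ r * 2 ^ (n - 1)) - 2 * 2 ^ r := by
      rw [Nat.mul_sub, mul_one]; ring_nf
    have h5 : 2 ^ r * (2 ^ n - 2) = 2 * (2 ^ r * 2 ^ (n - 1)) - 2 * 2 ^ r := by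
      rw [h2, Nat.mul_sub]; ring_nf
    omega
  omega

lemma degree_symm (n : ℕ) (c : Fin n → ℕ) :
    (Finsupp.equivFunOnFinite.symm c).degree = ∑ j, c j := by
  rw [Finsupp.degree]
  exact Finset.sum_subset (Finset.subset_univ _)
    (fun x _ hx => Finsupp.notMem_support_iff.mp hx)

lemma hc_Sq_monomial (n r : ℕ) (hn : 2 ≤ n) (φ : Fin (n - 1) ↪ Fin n) :
    homogeneousComponent (2 ^ (r + 1) * (2 ^ n - 2) + 1)
        (Sq (Fin n) (monomial (wfun n r φ) (1 : ZMod 2)))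
      = monomial (wfun n (r + 1) φ) (1 : ZMod 2) := by
  set w := wfun n r φ with hw
  -- the unique variable outside the range of φ
  have hcard : ((Finset.univ.image φ)ᶜ : Finset (Fin n)).card = 1 := by
    rw [Finset.card_compl, Finset.card_image_of_injective _ φ.injective]
    simp
    omega
  obtain ⟨j0, hj0⟩ := Finset.card_eq_one.mp hcard
  have hj0P : ∀ i, φ i ≠ j0 := by
    intro i hi
    have hmem : j0 ∈ (Finset.univ.image φ)ᶜ := hj0 ▸ Finset.mem_singleton_self j0
    rw [Finset.mem_compl, Finset.mem_image] at hmem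
    exact hmem ⟨i, Finset.mem_univ i, hi⟩
  have huniq : ∀ j : Fin n, (∀ i, φ i ≠ j) → j = j0 := by
    intro j hj
    have hmem : j ∈ (Finset.univ.image φ)ᶜ := by
      rw [Finset.mem_compl, Finset.mem_image]
      rintro ⟨i, -, hi⟩
      exact hj i hi
    rw [hj0, Finset.mem_singleton] at hmem
    exact hmem
  have hsum : ∑ j, w j = 2 ^ r * (2 ^ n - 2) + 1 :=
    (degree_wfun n r _ φ).symm.trans (degree_wfun_eq n r hn φ)
  have hdeg : ∀ t : Finset (Fin n),
      (Finsupp.equivFunOnFinite.symm fun j : Fin n =>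
        if j ∈ t then w j else 2 * w j).degree
      = (2 ^ r * (2 ^ n - 2) + 1) + ∑ j ∈ tᶜ, w j := by
    intro t
    rw [degree_symm]
    have hpt : ∀ j : Fin n, (if j ∈ t then w j else 2 * w j)
        = w j + if j ∈ tᶜ then w j else 0 := by
      intro j
      by_cases h : j ∈ t <;> simp [h, Finset.mem_compl] <;> ring
    rw [Finset.sum_congr rfl fun j _ => hpt j, Finset.sum_add_distrib, hsum,
      Finset.sum_ite_mem, Finset.univ_inter]
  have hsplit : ∀ t : Finset (Fin n), (∑ j ∈ t, w j) + ∑ j ∈ tᶜ, w j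
      = 2 ^ r * (2 ^ n - 2) + 1 := by
    intro t
    rw [Finset.sum_add_sum_compl, hsum]
  have hcond : ∀ t : Finset (Fin n),
      ((Finsupp.equivFunOnFinite.symm fun j : Fin n =>
        if j ∈ t then w j else 2 * w j).degree = 2 ^ (r + 1) * (2 ^ n - 2) + 1)
      ↔ (∑ j ∈ t, w j) = 1 := by
    intro t
    rw [hdeg t]
    have hp : (2:ℕ) ^ (r+1) * (2 ^ n - 2) = 2 * (2 ^ r * (2 ^ n - 2)) := by ring
    have := hsplit t
    omega
  have ht_iff : ∀ t : Finset (Fin n), (∑ j ∈ t, w j) = 1 ↔ t = {j0} := by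
    intro t
    constructor
    · intro h1
      obtain ⟨j, hj⟩ : t.Nonempty := by
        by_contra hne
        rw [Finset.not_nonempty_iff_eq_empty.mp hne] at h1
        simp at h1
      have hwj : w j = 1 := by
        have hle : w j ≤ ∑ j ∈ t, w j := Finset.single_le_sum (fun _ _ => Nat.zero_le _) hj
        have hpos := wfun_pos n r _ φ j
        rw [← hw] at hpos
        omega
      have hjj0 : j = j0 := by
        apply huniq
        intro i hi
        have := wfun_apply_eq n r _ φ i
        rw [hi] at this
        rw [← hw] at this
        rw [this] at hwj
        have : (2:ℕ) ≤ 2 ^ (r + (i:ℕ) + 1) := by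
          have : r + (i:ℕ) + 1 ≥ 1 := by omega
          calc (2:ℕ) = 2 ^ 1 := rfl
          _ ≤ 2 ^ (r + (i:ℕ) + 1) := Nat.pow_le_pow_right (by norm_num) this
        omega
      subst hjj0
      ext k
      simp only [Finset.mem_singleton]
      constructor
      · intro hk
        by_contra hkj
        have hsub : ({j, k} : Finset (Fin n)) ⊆ t := by
          intro x hx
          rcases Finset.mem_insert.mp hx with rfl | hx
          · exact hj
          · rwa [Finset.mem_singleton.mp hx]
        have hsum2 : w j + w k ≤ ∑ j ∈ t, w j := by
          have := Finset.sum_le_sum_of_subset hsub (f := w)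
          rwa [Finset.sum_pair (fun h => hkj h.symm)] at this
        have hpos := wfun_pos n r _ φ k
        rw [← hw] at hpos
        omega
      · rintro rfl
        exact hj
    · rintro rfl
      rw [Finset.sum_singleton]
      exact wfun_apply_ne n r _ φ j0 hj0P
  rw [Sq_monomial n w (hw ▸ wfun_isPow n r _ φ), map_sum,
    Finset.sum_congr rfl fun t _ => hc_mono n _ _,
    Finset.sum_eq_single_of_mem {j0} (Finset.mem_powerset.mpr (Finset.subset_univ _))
      (fun t _ htne => if_neg fun hcontra =>
        htne (((ht_iff t).mp ((hcond t).mp hcontra))))]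
  rw [if_pos ((hcond {j0}).mpr ((ht_iff {j0}).mpr rfl))]
  have hfs : (Finsupp.equivFunOnFinite.symm fun j : Fin n =>
      if j ∈ ({j0} : Finset (Fin n)) then w j else 2 * w j) = wfun n (r + 1) φ := by
    apply DFunLike.ext
    intro j
    show (if j ∈ ({j0} : Finset (Fin n)) then w j else 2 * w j) = wfun n (r + 1) φ j
    by_cases hj : j = j0
    · subst hj
      rw [if_pos (Finset.mem_singleton_self j), wfun_apply_ne n (r+1) _ φ j hj0P, hw,
        wfun_apply_ne n r _ φ j hj0P]
    · obtain ⟨i, rfl⟩ : ∃ i, φ i = j := by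
        by_contra hno
        push_neg at hno
        exact hj (huniq j hno)
      rw [if_neg (by simpa using hj), wfun_apply_eq n (r+1) _ φ i, hw,
        wfun_apply_eq n r _ φ i]
      ring
  rw [hfs]

lemma fseq_eq (n : ℕ) (hn : 2 ≤ n) : ∀ r,
    fseq n r = ∑ φ : Fin (n - 1) ↪ Fin n, monomial (wfun n r φ) (1 : ZMod 2)
  | 0 => by
    show ((List.ofFn fun k : Fin (n - 1) => Q (Fin n) (k : ℕ)).foldr
        (· ∘ₗ ·) LinearMap.id) (∏ j : Fin n, X j) = _
    have h := foldr_Q n (n - 1) 0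
    simp only [zero_add] at h
    exact h
  | (r + 1) => by
    show homogeneousComponent (2 ^ (r + 1) * (2 ^ n - 2) + 1) (Sq (Fin n) (fseq n r)) = _
    rw [fseq_eq n hn r, map_sum, map_sum]
    exact Finset.sum_congr rfl fun φ _ => hc_Sq_monomial n r hn φ

/-- `(Sq₁)^r ω ≠ 0`: each `f_r` is nonzero and homogeneous of degree
`2^r (2^n - 2) + 1`. -/
theorem sq_one_iterates_ne_zero (n : ℕ) (hn : 2 ≤ n) (r : ℕ) :
    (fseq n r).IsHomogeneous (2 ^ r * (2 ^ n - 2) + 1) ∧ fseq n r ≠ 0 := by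

  rw [fseq_eq n hn r]
  constructor
  · exact IsHomogeneous.sum _ _ _ fun φ _ =>
      isHomogeneous_monomial _ (degree_wfun_eq n r hn φ)
  · intro h0
    have hφ0 : ((n : ℕ) - 1) ≤ n := by omega
    set φ0 : Fin (n - 1) ↪ Fin n := Fin.castLEEmb hφ0 with hφ0def
    have hc : coeff (wfun n r φ0) (∑ φ : Fin (n - 1) ↪ Fin n,
        monomial (wfun n r φ) (1 : ZMod 2)) = 1 := by
      rw [coeff_sum, Finset.sum_eq_single_of_mem φ0 (Finset.mem_univ _)
        (fun φ _ hφ => by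
          rw [coeff_monomial, if_neg (fun hh => hφ (wfun_injective n r _ hh))]),
        coeff_monomial, if_pos rfl]
    rw [h0] at hc
    simp at hc
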